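/- Let R be a complete Noetherian local ring with maximal ideal 𝔪 and finite residue field, X an infinite set, ℱ a non-principal ultrafilter on X, and (M_α)_{α∈X} a bounded family of R-modules. Then there exist a sequence (α_n)_{n≥1} of elements of X and isomorphisms of R-modules f_n : M_{α_{n+1}}/𝔪^n M_{α_{n+1}} → M_{α_n}/𝔪^n M_{α_n} such that Patch_R((M_α)) is isomorphic to the inverse limit of the system (M_{α_n}/𝔪^n M_{α_n}) with transition maps given by reduction followed by f_n. -/

import Mathlib

open Filter IsLocalRing

section Ultra

variable {X : Type*} (ℱ : Ultrafilter X) (A : Type*) [Ring A]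

/-- The submodule of families vanishing on a set of the ultrafilter. -/
def ultraZero (M : X → Type*) [∀ α, AddCommGroup (M α)] [∀ α, Module A (M α)] :
    Submodule A (∀ α, M α) where
  carrier := {x | ∀ᶠ α in (ℱ : Filter X), x α = 0}
  add_mem' := by
    intro a b ha hb
    filter_upwards [ha, hb] with α h1 h2
    simp [h1, h2]
  zero_mem' := Filter.Eventually.of_forall fun _ => rfl
  smul_mem' := by
    intro c x hx
    filter_upwards [hx] with α h
    simp [h]

lemma mem_ultraZero {M : X → Type*} [∀ α, AddCommGroup (M α)] [∀ α, Module A (M α)]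
    {x : ∀ α, M α} :
    x ∈ ultraZero ℱ A M ↔ ∀ᶠ α in (ℱ : Filter X), x α = 0 := Iff.rfl

/-- The ultraproduct of a family of `A`-modules along the ultrafilter `ℱ`. -/
abbrev Ultraproduct (M : X → Type*) [∀ α, AddCommGroup (M α)] [∀ α, Module A (M α)] :=
  (∀ α, M α) ⧸ ultraZero ℱ A M

/-- The map induced on ultraproducts by a family of linear maps. -/
def ultraMap {M N : X → Type*} [∀ α, AddCommGroup (M α)] [∀ α, Module A (M α)]
    [∀ α, AddCommGroup (N α)] [∀ α, Module A (N α)] (f : ∀ α, M α →ₗ[A] N α) :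
    Ultraproduct ℱ A M →ₗ[A] Ultraproduct ℱ A N :=
  Submodule.mapQ _ _ (LinearMap.pi fun α => (f α).comp (LinearMap.proj α)) <| by
    intro x hx
    simp only [Submodule.mem_comap]
    rw [mem_ultraZero]
    filter_upwards [hx] with α h
    simp [h]

lemma ultraMap_mk {M N : X → Type*} [∀ α, AddCommGroup (M α)] [∀ α, Module A (M α)]
    [∀ α, AddCommGroup (N α)] [∀ α, Module A (N α)] (f : ∀ α, M α →ₗ[A] N α)
    (x : ∀ α, M α) :
    ultraMap ℱ A f (Submodule.Quotient.mk x) =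
      Submodule.Quotient.mk (fun α => f α (x α)) := by
  simp [ultraMap, Submodule.mapQ_apply]
  rfl

end Ultra

section SeqLimit

variable (R : Type*) [CommRing R]

/-- The inverse limit of a sequence of modules, realised as a submodule of the product. -/
def seqLimit (P : ℕ → Type*) [∀ n, AddCommGroup (P n)] [∀ n, Module R (P n)]
    (g : ∀ n, P (n + 1) →ₗ[R] P n) : Submodule R (∀ n, P n) where
  carrier := {x | ∀ n, g n (x (n + 1)) = x n}
  add_mem' := by
    intro a b ha hb n
    simp [ha n, hb n]
  zero_mem' := by intro n; simp
  smul_mem' := by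
    intro c x hx n
    simp [hx n]

end SeqLimit

section Patch

variable (R : Type*) [CommRing R] [IsLocalRing R]

/-- The submodule 𝔪ⁿ•M of a module M. -/
abbrev mPow (n : ℕ) (M : Type*) [AddCommGroup M] [Module R M] : Submodule R M :=
  (maximalIdeal R ^ n) • (⊤ : Submodule R M)

/-- The quotient M/𝔪ⁿM. -/
abbrev ModQuot (n : ℕ) (M : Type*) [AddCommGroup M] [Module R M] :=
  M ⧸ mPow R n M

lemma mPow_succ_le (n : ℕ) (M : Type*) [AddCommGroup M] [Module R M] :
    mPow R (n + 1) M ≤ mPow R n M :=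
  Submodule.smul_mono_left (Ideal.pow_le_pow_right n.le_succ)

/-- The reduction map M/𝔪ⁿ⁺¹M → M/𝔪ⁿM. -/
def quotTrans (n : ℕ) (M : Type*) [AddCommGroup M] [Module R M] :
    ModQuot R (n + 1) M →ₗ[R] ModQuot R n M :=
  Submodule.mapQ _ _ LinearMap.id <| by
    intro x hx
    simpa using mPow_succ_le R n M hx

lemma quotTrans_mk (n : ℕ) (M : Type*) [AddCommGroup M] [Module R M] (x : M) :
    quotTrans R n M (Submodule.Quotient.mk x) = Submodule.Quotient.mk x := by
  simp [quotTrans, Submodule.mapQ_apply]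

variable {X : Type*} (ℱ : Ultrafilter X)

/-- The n-th level of the patching construction: the ultraproduct of the quotients M α/𝔪ⁿ. -/
abbrev UP (M : X → Type*) [∀ α, AddCommGroup (M α)] [∀ α, Module R (M α)] (n : ℕ) :=
  Ultraproduct ℱ R (fun α => ModQuot R n (M α))

/-- The transition maps between the levels of the patching construction. -/
def upTrans (M : X → Type*) [∀ α, AddCommGroup (M α)] [∀ α, Module R (M α)] (n : ℕ) :
    UP R ℱ M (n + 1) →ₗ[R] UP R ℱ M n :=
  ultraMap ℱ R (fun α => quotTrans R n (M α))

/-- The patching module of a family of R-modules: the inverse limit over n of the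
ultraproducts of the quotients M α/𝔪ⁿ. -/
def PatchS (M : X → Type*) [∀ α, AddCommGroup (M α)] [∀ α, Module R (M α)] :
    Submodule R (∀ n, UP R ℱ M n) :=
  seqLimit R (fun n => UP R ℱ M n) (fun n => upTrans R ℱ M n)

lemma mem_PatchS {M : X → Type*} [∀ α, AddCommGroup (M α)] [∀ α, Module R (M α)]
    {x : ∀ n, UP R ℱ M n} :
    x ∈ PatchS R ℱ M ↔ ∀ n, upTrans R ℱ M n (x (n + 1)) = x n := Iff.rfl

-- functoriality of ModQuot
lemma mapQ_cond {M N : Type*} [AddCommGroup M] [Module R M] [AddCommGroup N] [Module R N]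
    (f : M →ₗ[R] N) (n : ℕ) : mPow R n M ≤ (mPow R n N).comap f := by
  rw [← Submodule.map_le_iff_le_comap, Submodule.map_smul'']
  exact Submodule.smul_mono le_rfl le_top

/-- The map induced by f : M →ₗ N on the quotients modulo 𝔪ⁿ. -/
def modQuotMap (n : ℕ) {M N : Type*} [AddCommGroup M] [Module R M] [AddCommGroup N]
    [Module R N] (f : M →ₗ[R] N) : ModQuot R n M →ₗ[R] ModQuot R n N :=
  Submodule.mapQ _ _ f (mapQ_cond R f n)

lemma modQuotMap_mk (n : ℕ) {M N : Type*} [AddCommGroup M] [Module R M] [AddCommGroup N]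
    [Module R N] (f : M →ₗ[R] N) (x : M) :
    modQuotMap R n f (Submodule.Quotient.mk x) = Submodule.Quotient.mk (f x) := by
  simp [modQuotMap, Submodule.mapQ_apply]

lemma quotTrans_modQuotMap {M N : Type*} [AddCommGroup M] [Module R M] [AddCommGroup N]
    [Module R N] (f : M →ₗ[R] N) (n : ℕ) (q : ModQuot R (n + 1) M) :
    quotTrans R n N (modQuotMap R (n + 1) f q) = modQuotMap R n f (quotTrans R n M q) := by
  obtain ⟨z, rfl⟩ := Submodule.Quotient.mk_surjective _ q
  rw [modQuotMap_mk, quotTrans_mk, quotTrans_mk, modQuotMap_mk]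

lemma level_compat {M N : X → Type*} [∀ α, AddCommGroup (M α)] [∀ α, Module R (M α)]
    [∀ α, AddCommGroup (N α)] [∀ α, Module R (N α)] (f : ∀ α, M α →ₗ[R] N α) (n : ℕ)
    (u : UP R ℱ M (n + 1)) :
    upTrans R ℱ N n (ultraMap ℱ R (fun α => modQuotMap R (n + 1) (f α)) u) =
      ultraMap ℱ R (fun α => modQuotMap R n (f α)) (upTrans R ℱ M n u) := by
  obtain ⟨y, rfl⟩ := Submodule.Quotient.mk_surjective _ u
  simp only [upTrans]
  rw [ultraMap_mk, ultraMap_mk, ultraMap_mk, ultraMap_mk]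
  exact congrArg _ (funext fun α => quotTrans_modQuotMap R (f α) n (y α))

/-- The map induced on patching modules by a family of linear maps. -/
def patchMap {M N : X → Type*} [∀ α, AddCommGroup (M α)] [∀ α, Module R (M α)]
    [∀ α, AddCommGroup (N α)] [∀ α, Module R (N α)] (f : ∀ α, M α →ₗ[R] N α) :
    ↥(PatchS R ℱ M) →ₗ[R] ↥(PatchS R ℱ N) :=
  LinearMap.codRestrict _
    ((LinearMap.pi fun n =>
        (ultraMap ℱ R fun α => modQuotMap R n (f α)).comp (LinearMap.proj n)).comp
      (PatchS R ℱ M).subtype)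
    (by
      intro x
      rw [mem_PatchS]
      intro n
      simp only [LinearMap.comp_apply, LinearMap.pi_apply, LinearMap.proj_apply,
        Submodule.subtype_apply]
      rw [level_compat, x.2 n])

end Patch

section Aux

open Function

variable {R : Type*} [CommRing R]

lemma mem_seqLimit {P : ℕ → Type*} [∀ n, AddCommGroup (P n)] [∀ n, Module R (P n)]
    {g : ∀ n, P (n + 1) →ₗ[R] P n} {x : ∀ n, P n} :
    x ∈ seqLimit R P g ↔ ∀ n, g n (x (n + 1)) = x n := Iff.rfl

/-- Level-wise equivalences commuting with the transition maps induce an equivalence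
of the inverse limits. -/
def seqLimitCongr {P Q : ℕ → Type*} [∀ n, AddCommGroup (P n)] [∀ n, Module R (P n)]
    [∀ n, AddCommGroup (Q n)] [∀ n, Module R (Q n)]
    (g : ∀ n, P (n + 1) →ₗ[R] P n) (g' : ∀ n, Q (n + 1) →ₗ[R] Q n)
    (e : ∀ n, P n ≃ₗ[R] Q n)
    (hcomm : ∀ n (x : P (n + 1)), e n (g n x) = g' n (e (n + 1) x)) :
    ↥(seqLimit R P g) ≃ₗ[R] ↥(seqLimit R Q g') where
  toFun x := ⟨fun n => e n (x.1 n), fun n => by rw [← hcomm, x.2 n]⟩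
  invFun y := ⟨fun n => (e n).symm (y.1 n), fun n => by
    apply (e n).injective
    rw [hcomm n, LinearEquiv.apply_symm_apply, LinearEquiv.apply_symm_apply, y.2 n]⟩
  map_add' x y := by
    apply Subtype.ext; funext n; exact map_add (e n) _ _
  map_smul' r x := by
    apply Subtype.ext; funext n; exact map_smul (e n) r _
  left_inv x := by
    apply Subtype.ext; funext n; exact (e n).symm_apply_apply _
  right_inv y := by
    apply Subtype.ext; funext n; exact (e n).apply_symm_apply _

variable {X : Type*}

lemma exists_eventually_eq (ℱ : Ultrafilter X) {V : Type*} [Finite V] (y : X → V) :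
    ∃ v, ∀ᶠ α in (ℱ : Filter X), y α = v := by
  obtain ⟨v, hv⟩ := (Ultrafilter.map y ℱ).eq_pure_of_finite
  refine ⟨v, ?_⟩
  have h1 : {v} ∈ Ultrafilter.map y ℱ := by
    rw [hv]; exact Ultrafilter.mem_pure.mpr rfl
  exact h1

lemma ultraMap_surjective (ℱ : Ultrafilter X) (A : Type*) [Ring A] {M N : X → Type*}
    [∀ α, AddCommGroup (M α)] [∀ α, Module A (M α)]
    [∀ α, AddCommGroup (N α)] [∀ α, Module A (N α)]
    (f : ∀ α, M α →ₗ[A] N α) (hf : ∀ α, Surjective (f α)) :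
    Surjective (ultraMap ℱ A f) := by
  intro z
  obtain ⟨y, rfl⟩ := Submodule.Quotient.mk_surjective _ z
  refine ⟨Submodule.Quotient.mk (fun α => surjInv (hf α) (y α)), ?_⟩
  rw [ultraMap_mk]
  exact congrArg _ (funext fun α => surjInv_eq (hf α) (y α))

lemma ultraMap_bijective (ℱ : Ultrafilter X) (A : Type*) [Ring A] {M N : X → Type*}
    [∀ α, AddCommGroup (M α)] [∀ α, Module A (M α)]
    [∀ α, AddCommGroup (N α)] [∀ α, Module A (N α)]
    (f : ∀ α, M α →ₗ[A] N α) (hf : ∀ᶠ α in (ℱ : Filter X), Bijective (f α)) :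
    Bijective (ultraMap ℱ A f) := by
  classical
  constructor
  · rw [injective_iff_map_eq_zero]
    intro z hz
    obtain ⟨x, rfl⟩ := Submodule.Quotient.mk_surjective _ z
    rw [ultraMap_mk, Submodule.Quotient.mk_eq_zero, mem_ultraZero] at hz
    rw [Submodule.Quotient.mk_eq_zero, mem_ultraZero]
    filter_upwards [hz, hf] with α h1 h2
    exact h2.1 (by simpa using h1)
  · intro z
    obtain ⟨y, rfl⟩ := Submodule.Quotient.mk_surjective _ z
    refine ⟨Submodule.Quotient.mk
      (fun α => if h : Bijective (f α) then surjInv h.2 (y α) else 0), ?_⟩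
    rw [ultraMap_mk, Submodule.Quotient.eq, mem_ultraZero]
    filter_upwards [hf] with α h
    simp only [Pi.sub_apply, dif_pos h, surjInv_eq h.2, sub_self]

/-- The diagonal embedding into an ultraproduct of a constant family. -/
def ultraDiag (ℱ : Ultrafilter X) (A : Type*) [Ring A] (V : Type*) [AddCommGroup V]
    [Module A V] : V →ₗ[A] Ultraproduct ℱ A (fun _ : X => V) :=
  (ultraZero ℱ A (fun _ : X => V)).mkQ.comp (LinearMap.pi fun _ => LinearMap.id)

lemma ultraDiag_bijective (ℱ : Ultrafilter X) (A : Type*) [Ring A] (V : Type*)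
    [AddCommGroup V] [Module A V] [Finite V] : Bijective (ultraDiag ℱ A V) := by
  constructor
  · rw [injective_iff_map_eq_zero]
    intro v hv
    have hv' : (fun _ : X => v) ∈ ultraZero ℱ A (fun _ => V) := by
      rwa [← Submodule.Quotient.mk_eq_zero]
    rw [mem_ultraZero] at hv'
    obtain ⟨α, hα⟩ := Ultrafilter.nonempty_of_mem hv'
    exact hα
  · intro z
    obtain ⟨y, rfl⟩ := Submodule.Quotient.mk_surjective _ z
    obtain ⟨v, hv⟩ := exists_eventually_eq ℱ y
    refine ⟨v, ?_⟩
    show Submodule.Quotient.mk _ = Submodule.Quotient.mk y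
    rw [Submodule.Quotient.eq, mem_ultraZero]
    filter_upwards [hv] with α h
    simp [h]

/-- The ultraproduct of a constant finite family is the module itself. -/
noncomputable def ultraConstEquiv (ℱ : Ultrafilter X) (A : Type*) [Ring A] (V : Type*)
    [AddCommGroup V] [Module A V] [Finite V] :
    Ultraproduct ℱ A (fun _ : X => V) ≃ₗ[A] V :=
  (LinearEquiv.ofBijective (ultraDiag ℱ A V) (ultraDiag_bijective ℱ A V)).symm

section LocalAux

variable (R) [IsLocalRing R]

lemma mPow_map_mkQ (k : ℕ) {M : Type*} [AddCommGroup M] [Module R M] (S : Submodule R M) :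
    mPow R k (M ⧸ S) = (mPow R k M).map S.mkQ := by
  rw [Submodule.map_smul'', Submodule.map_top, Submodule.range_mkQ]

lemma mPow_quot_self (n : ℕ) (M : Type*) [AddCommGroup M] [Module R M] :
    mPow R n (ModQuot R n M) = ⊥ := by
  rw [mPow_map_mkQ, Submodule.mkQ_map_self]

lemma ker_quotTrans (n : ℕ) (M : Type*) [AddCommGroup M] [Module R M] :
    LinearMap.ker (quotTrans R n M) = (mPow R n M).map (mPow R (n + 1) M).mkQ := by
  ext z
  constructor
  · intro hz
    obtain ⟨x, rfl⟩ := Submodule.Quotient.mk_surjective _ z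
    rw [LinearMap.mem_ker, quotTrans_mk, Submodule.Quotient.mk_eq_zero] at hz
    exact ⟨x, hz, rfl⟩
  · rintro ⟨x, hx, rfl⟩
    rw [LinearMap.mem_ker, Submodule.mkQ_apply, quotTrans_mk, Submodule.Quotient.mk_eq_zero]
    exact hx

lemma smul_mem_mPow_succ {n : ℕ} {M : Type*} [AddCommGroup M] [Module R M] {m : R}
    (hm : m ∈ maximalIdeal R) {y : M} (hy : y ∈ mPow R n M) :
    m • y ∈ mPow R (n + 1) M := by
  have h : mPow R (n + 1) M = maximalIdeal R • mPow R n M := by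
    show (maximalIdeal R ^ (n + 1)) • (⊤ : Submodule R M) = _
    rw [pow_succ', ← Ideal.smul_eq_mul, Submodule.smul_assoc]
  rw [h]
  exact Submodule.smul_mem_smul hm hy

lemma quotTrans_surjective (n : ℕ) (M : Type*) [AddCommGroup M] [Module R M] :
    Surjective (quotTrans R n M) := by
  intro z
  obtain ⟨x, rfl⟩ := Submodule.Quotient.mk_surjective _ z
  exact ⟨Submodule.Quotient.mk x, quotTrans_mk R n M x⟩

variable [Finite (IsLocalRing.ResidueField R)]

lemma finite_of_fg_mIdeal_smul {N : Type*} [AddCommGroup N] [Module R N] [Module.Finite R N]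
    (h : ∀ m ∈ maximalIdeal R, ∀ x : N, m • x = 0) : Finite N := by
  obtain ⟨k, ψ, hψ⟩ := Module.Finite.exists_fin' R N
  have hres : Surjective (IsLocalRing.residue R) := Ideal.Quotient.mk_surjective
  have expand : ∀ w : Fin k → R, ψ w = ∑ i, w i • ψ (Pi.single i 1) := by
    intro w
    have hw : w = ∑ i, w i • (Pi.single i (1 : R) : Fin k → R) := by
      funext j
      rw [Finset.sum_apply]
      simp [Pi.single_apply, Finset.sum_ite_eq]
    conv_lhs => rw [hw]
    rw [map_sum]
    simp [map_smul]
  have key : ∀ u v : Fin k → R,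
      (∀ i, IsLocalRing.residue R (u i) = IsLocalRing.residue R (v i)) → ψ u = ψ v := by
    intro u v huv
    rw [← sub_eq_zero, expand u, expand v, ← Finset.sum_sub_distrib]
    refine Finset.sum_eq_zero fun i _ => ?_
    rw [← sub_smul]
    refine h _ ?_ _
    have : IsLocalRing.residue R (u i - v i) = 0 := by
      rw [map_sub, huv i, sub_self]
    exact (Ideal.Quotient.eq_zero_iff_mem).mp this
  refine Finite.of_surjective
    (fun w : Fin k → IsLocalRing.ResidueField R => ψ fun i => surjInv hres (w i)) ?_
  intro x
  obtain ⟨v, rfl⟩ := hψ x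
  exact ⟨fun i => IsLocalRing.residue R (v i),
    key _ _ fun i => surjInv_eq hres (IsLocalRing.residue R (v i))⟩

lemma finite_of_submodule_quot {M : Type*} [AddCommGroup M] [Module R M] (S : Submodule R M)
    (h1 : Finite S) (h2 : Finite (M ⧸ S)) : Finite M := by
  haveI : Finite S.toAddSubgroup := h1
  haveI : Finite (M ⧸ S.toAddSubgroup) := h2
  exact Finite.of_addSubgroup_quotient (H := S.toAddSubgroup)

variable [IsNoetherianRing R]

lemma finite_modQuot (n : ℕ) (M : Type*) [AddCommGroup M] [Module R M] [Module.Finite R M] :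
    Finite (ModQuot R n M) := by
  induction n with
  | zero =>
    have htop : mPow R 0 M = ⊤ := by
      show (maximalIdeal R ^ 0) • (⊤ : Submodule R M) = ⊤
      rw [pow_zero, Ideal.one_eq_top, Submodule.top_smul]
    haveI : Subsingleton (ModQuot R 0 M) :=
      Submodule.Quotient.subsingleton_iff.mpr htop
    exact Finite.of_subsingleton
  | succ n ih =>
    haveI : Module.Finite R (ModQuot R (n + 1) M) := Module.Finite.quotient R _
    set K := LinearMap.ker (quotTrans R n M) with hK
    have h2 : Finite (ModQuot R (n + 1) M ⧸ K) :=
      Finite.of_equiv _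
        ((quotTrans R n M).quotKerEquivOfSurjective (quotTrans_surjective R n M)).symm.toEquiv
    have h1 : Finite K := by
      haveI : Module.Finite R K := inferInstance
      apply finite_of_fg_mIdeal_smul R
      rintro m hm ⟨z, hz⟩
      rw [hK, ker_quotTrans] at hz
      obtain ⟨y, hy, rfl⟩ := hz
      apply Subtype.ext
      show m • (mPow R (n + 1) M).mkQ y = 0
      rw [← map_smul, Submodule.mkQ_apply, Submodule.Quotient.mk_eq_zero]
      exact smul_mem_mPow_succ R hm hy
    exact finite_of_submodule_quot R K h1 h2

lemma finite_submodules (G : Type*) [AddCommGroup G] [Module R G] [Finite G] :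
    Finite (Submodule R G) :=
  Finite.of_injective (fun S : Submodule R G => (S : Set G)) SetLike.coe_injective

/-- The model isomorphism: if `π : Rˢ → M` is surjective with kernel `K`, then
`M/𝔪ⁿM` is isomorphic to the quotient of `Rˢ/𝔪ⁿ` by the image of `K`. -/
noncomputable def modelIso (n : ℕ) {s : ℕ} {M : Type*} [AddCommGroup M] [Module R M]
    (π : (Fin s → R) →ₗ[R] M) (hπ : Surjective π) :
    ModQuot R n M ≃ₗ[R]
      (ModQuot R n (Fin s → R) ⧸
        (LinearMap.ker π).map (mPow R n (Fin s → R)).mkQ) := by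
  set F := Fin s → R
  set K := LinearMap.ker π with hK
  set P := mPow R n F with hP
  have e2 : (F ⧸ K) ≃ₗ[R] M := π.quotKerEquivOfSurjective hπ
  have h2 : (mPow R n (F ⧸ K)).map (e2 : (F ⧸ K) →ₗ[R] M) = mPow R n M := by
    rw [Submodule.map_smul'', Submodule.map_top, LinearEquiv.range]
  have eq1 : ModQuot R n (F ⧸ K) ≃ₗ[R] ModQuot R n M :=
    Submodule.Quotient.equiv _ _ e2 h2
  have eq2 : ModQuot R n (F ⧸ K) ≃ₗ[R] ((F ⧸ K) ⧸ (K ⊔ P).map K.mkQ) :=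
    Submodule.quotEquivOfEq _ _
      (by rw [Submodule.map_sup, Submodule.mkQ_map_self, bot_sup_eq, mPow_map_mkQ])
  have eq3 : ((F ⧸ K) ⧸ (K ⊔ P).map K.mkQ) ≃ₗ[R] (F ⧸ (K ⊔ P)) :=
    Submodule.quotientQuotientEquivQuotient K (K ⊔ P) le_sup_left
  have eq4 : ((F ⧸ P) ⧸ (P ⊔ K).map P.mkQ) ≃ₗ[R] (F ⧸ (P ⊔ K)) :=
    Submodule.quotientQuotientEquivQuotient P (P ⊔ K) le_sup_left
  have eq5 : ((F ⧸ P) ⧸ K.map P.mkQ) ≃ₗ[R] ((F ⧸ P) ⧸ (P ⊔ K).map P.mkQ) :=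
    Submodule.quotEquivOfEq _ _
      (by rw [Submodule.map_sup, Submodule.mkQ_map_self, bot_sup_eq])
  have eq6 : (F ⧸ (K ⊔ P)) ≃ₗ[R] (F ⧸ (P ⊔ K)) :=
    Submodule.quotEquivOfEq _ _ (sup_comm K P)
  exact eq1.symm.trans (eq2.trans (eq3.trans (eq6.trans (eq4.symm.trans eq5.symm))))

end LocalAux

end Aux


set_option maxRecDepth 8000 in
/-- Selection lemma.  Let R be a complete Noetherian local ring with finite
residue field, ℱ a non-principal ultrafilter on an infinite set X and (M α) a bounded family
of R-modules.  Then there are a sequence (a n) of indices and isomorphisms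
f n : M (a (n+1))/𝔪ⁿ ≃ M (a n)/𝔪ⁿ such that the patching module is isomorphic to the inverse
limit of the system (M (a n)/𝔪ⁿ) with transition maps given by reduction followed by f n. -/
theorem patch_selection
    (R : Type*) [CommRing R] [IsLocalRing R] [IsNoetherianRing R]
    [IsAdicComplete (IsLocalRing.maximalIdeal R) R] [Finite (IsLocalRing.ResidueField R)]
    {X : Type*} [Infinite X] (ℱ : Ultrafilter X) (hℱ : ∀ x : X, ℱ ≠ pure x)
    (M : X → Type*) [∀ α, AddCommGroup (M α)] [∀ α, Module R (M α)]
    (s : ℕ) (hbdd : ∀ α, ∃ f : (Fin s → R) →ₗ[R] M α, Function.Surjective f) :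
    ∃ (a : ℕ → X) (f : ∀ n, ModQuot R n (M (a (n + 1))) ≃ₗ[R] ModQuot R n (M (a n))),
      Nonempty (↥(PatchS R ℱ M) ≃ₗ[R]
        ↥(seqLimit R (fun n => ModQuot R n (M (a n)))
          (fun n => (f n).toLinearMap ∘ₗ quotTrans R n (M (a (n + 1)))))) := by
  classical
  choose π hπ using hbdd
  have hMfin : ∀ α, Module.Finite R (M α) := fun α => Module.Finite.of_surjective (π α) (hπ α)
  have hGfin : ∀ n : ℕ, Finite (ModQuot R n (Fin s → R)) := fun n => finite_modQuot R n _
  let N : (n : ℕ) → X → Submodule R (ModQuot R n (Fin s → R)) :=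
    fun n α => (LinearMap.ker (π α)).map (mPow R n (Fin s → R)).mkQ
  have hc : ∀ n : ℕ, ∃ c : Submodule R (ModQuot R n (Fin s → R)),
      ∀ᶠ α in (ℱ : Filter X), N n α = c := by
    intro n
    haveI := hGfin n
    haveI := finite_submodules R (ModQuot R n (Fin s → R))
    exact exists_eventually_eq ℱ (N n)
  choose c hc using hc
  have hU : ∀ n : ℕ, ∀ᶠ α in (ℱ : Filter X), ∀ k ≤ n, N k α = c k := by
    intro n
    induction n with
    | zero =>
      filter_upwards [hc 0] with α h k hk
      obtain rfl : k = 0 := Nat.le_zero.mp hk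
      exact h
    | succ n ih =>
      filter_upwards [ih, hc (n + 1)] with α h1 h2 k hk
      rcases eq_or_lt_of_le hk with h | h
      · subst h; exact h2
      · exact h1 k (Nat.lt_succ_iff.mp h)
  have hA : ∀ n : ℕ, ∃ α : X, ∀ k ≤ n, N k α = c k := fun n => by
    obtain ⟨α, hα⟩ := Ultrafilter.nonempty_of_mem (hU n)
    exact ⟨α, hα⟩
  choose a ha using hA
  have hfinM : ∀ (n : ℕ) (α : X), Finite (ModQuot R n (M α)) := fun n α =>
    haveI := hMfin α
    finite_modQuot R n _
  let Q : ℕ → Type _ := fun n => ModQuot R n (Fin s → R) ⧸ c n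
  have hQfin : ∀ n, Finite (Q n) := fun n => by
    haveI := hGfin n; exact Quotient.finite _
  let E : (n m : ℕ) → n ≤ m → (ModQuot R n (M (a m)) ≃ₗ[R] Q n) := fun n m hnm =>
    (modelIso R n (π (a m)) (hπ (a m))).trans (Submodule.quotEquivOfEq _ _ (ha m n hnm))
  let h : (n : ℕ) → (α : X) → (ModQuot R n (M α) →ₗ[R] Q n) := fun n α =>
    if hα : N n α = c n then
      ((modelIso R n (π α) (hπ α)).trans (Submodule.quotEquivOfEq _ _ hα)).toLinearMap
    else 0
  have hbij : ∀ n, ∀ᶠ α in (ℱ : Filter X), Function.Bijective (h n α) := by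
    intro n
    filter_upwards [hc n] with α hα
    have hval : h n α = ((modelIso R n (π α) (hπ α)).trans
        (Submodule.quotEquivOfEq _ _ hα)).toLinearMap := dif_pos hα
    rw [hval]
    exact LinearEquiv.bijective _
  let e : (n : ℕ) → (UP R ℱ M n ≃ₗ[R] Q n) := fun n =>
    letI := hQfin n
    (LinearEquiv.ofBijective (ultraMap ℱ R (h n)) (ultraMap_bijective ℱ R (h n) (hbij n))).trans
      (ultraConstEquiv ℱ R (Q n))
  let ε : (n : ℕ) → (UP R ℱ M n ≃ₗ[R] ModQuot R n (M (a n))) := fun n =>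
    (e n).trans (E n n le_rfl).symm
  let t : (n : ℕ) → (ModQuot R (n + 1) (M (a (n + 1))) →ₗ[R] ModQuot R n (M (a n))) := fun n =>
    (ε n).toLinearMap ∘ₗ (upTrans R ℱ M n) ∘ₗ (ε (n + 1)).symm.toLinearMap
  have ht_apply : ∀ n x, t n x = ε n (upTrans R ℱ M n ((ε (n + 1)).symm x)) := fun n x => rfl
  have hker : ∀ n, mPow R n (M (a (n + 1))) ≤
      LinearMap.ker ((t n) ∘ₗ (mPow R (n + 1) (M (a (n + 1)))).mkQ) := by
    intro n x hx
    rw [LinearMap.mem_ker, LinearMap.comp_apply]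
    have h1 : (mPow R (n + 1) (M (a (n + 1)))).mkQ x
        ∈ mPow R n (ModQuot R (n + 1) (M (a (n + 1)))) := by
      rw [mPow_map_mkQ]
      exact Submodule.mem_map_of_mem hx
    have h2 := mapQ_cond R (t n) n h1
    rw [Submodule.mem_comap, mPow_quot_self, Submodule.mem_bot] at h2
    exact h2
  let f' : (n : ℕ) → (ModQuot R n (M (a (n + 1))) →ₗ[R] ModQuot R n (M (a n))) := fun n =>
    Submodule.liftQ _ ((t n) ∘ₗ (mPow R (n + 1) (M (a (n + 1)))).mkQ) (hker n)
  have hfq : ∀ n (z : ModQuot R (n + 1) (M (a (n + 1)))),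
      f' n (quotTrans R n _ z) = t n z := by
    intro n z
    obtain ⟨x, rfl⟩ := Submodule.Quotient.mk_surjective _ z
    rw [quotTrans_mk]
    rfl
  have hsurj : ∀ n, Function.Surjective (f' n) := by
    intro n
    intro y
    obtain ⟨w, hw⟩ := ultraMap_surjective ℱ R (fun α => quotTrans R n (M α))
      (fun α => quotTrans_surjective R n (M α)) ((ε n).symm y)
    refine ⟨quotTrans R n _ (ε (n + 1) w), ?_⟩
    rw [hfq, ht_apply, LinearEquiv.symm_apply_apply]
    show ε n (upTrans R ℱ M n w) = y
    rw [show upTrans R ℱ M n w = (ε n).symm y from hw, LinearEquiv.apply_symm_apply]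
  have hinj : ∀ n, Function.Injective (f' n) := by
    intro n
    haveI := hfinM n (a (n + 1))
    exact (Finite.injective_iff_surjective_of_equiv
      ((E n (n + 1) (Nat.le_succ n)).trans (E n n le_rfl).symm).toEquiv).mpr (hsurj n)
  refine ⟨a, fun n => LinearEquiv.ofBijective (f' n) ⟨hinj n, hsurj n⟩, ⟨?_⟩⟩
  refine seqLimitCongr _ _ ε ?_
  intro n u
  show ε n (upTrans R ℱ M n u) = f' n (quotTrans R n _ (ε (n + 1) u))
  rw [hfq, ht_apply, LinearEquiv.symm_apply_apply]
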